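/- Let R be a finite commutative local ring of odd characteristic in which -1 is not a square of a unit, let z be a unit of R that is not a square of a unit, and let ν be a positive odd integer. Then I_{2ν} ⊕ (z) is cogredient to H_{2ν} ⊕ (1) over R. -/

import Mathlib

/-- Two square matrices are cogredient if `P * S1 * P.transpose = S2` for some invertible `P`. -/
def Cogredient {R : Type*} [CommRing R] {n : Type*} [Fintype n] [DecidableEq n]
    (S1 S2 : Matrix n n R) : Prop :=
  ∃ P : Matrix n n R, IsUnit P.det ∧ P * S1 * P.transpose = S2

/-- Block diagonal sum `A ⊕ B` of square matrices. -/
def matOplus {R : Type*} [CommRing R] {a b : ℕ}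
    (A : Matrix (Fin a) (Fin a) R) (B : Matrix (Fin b) (Fin b) R) :
    Matrix (Fin (a + b)) (Fin (a + b)) R :=
  (Matrix.reindex finSumFinEquiv finSumFinEquiv) (Matrix.fromBlocks A 0 0 B)

/-- The hyperbolic matrix `H_{2ν} = [[0, I_ν], [I_ν, 0]]`. -/
def hypMat (R : Type*) [CommRing R] (ν : ℕ) : Matrix (Fin (ν + ν)) (Fin (ν + ν)) R :=
  (Matrix.reindex finSumFinEquiv finSumFinEquiv)
    (Matrix.fromBlocks (0 : Matrix (Fin ν) (Fin ν) R) 1 1 0)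

set_option linter.unusedSectionVars false
set_option linter.unusedTactic false
set_option linter.unreachableTactic false
set_option linter.unusedVariables false
set_option linter.unnecessarySimpa false

open Matrix

/-! ### Ring-theoretic lemmas -/

section RingLemmas
variable {R : Type*} [CommRing R] [IsLocalRing R]

lemma aux_two_isUnit (hchar : Odd (ringChar R)) : IsUnit (2 : R) := by
  rcases hchar with ⟨t, ht⟩
  refine IsUnit.of_mul_eq_one (a := 2) ((t : R) + 1) ?_
  have h0 : ((ringChar R : ℕ) : R) = 0 := ringChar.Nat.cast_ringChar
  calc (2:R) * ((t:R)+1) = ((2*t+1+1 : ℕ) : R) := by push_cast; ring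
  _ = ((ringChar R + 1 : ℕ) : R) := by rw [← ht]
  _ = 1 := by push_cast; rw [h0]; ring

lemma aux_sqrt_one (h2 : IsUnit (2 : R)) (x : R) (hxu : IsUnit x) (hx : x ^ 2 = 1) :
    x = 1 ∨ x = -1 := by
  have hsum : IsUnit ((x - 1) + (x + 1)) := by
    have h : (x - 1) + (x + 1) = 2 * x := by ring
    rw [h]; exact h2.mul hxu
  have hprod : (x - 1) * (x + 1) = 0 := by linear_combination hx
  rcases IsLocalRing.isUnit_or_isUnit_of_isUnit_add hsum with h | h
  · right
    have := h.mul_left_cancel (a := x - 1) (by rw [hprod, mul_zero] : (x-1)*(x+1) = (x-1)*0)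
    linear_combination this
  · left
    have h0 : (x + 1) * (x - 1) = (x + 1) * 0 := by rw [mul_zero]; linear_combination hprod
    have := h.mul_left_cancel h0
    linear_combination this

lemma aux_sq_or_neg_sq (h2 : IsUnit (2 : R)) [Fintype R]
    (hm1 : ∀ a : Rˣ, (-1 : R) ≠ (a : R) ^ 2) (g : Rˣ) :
    (∃ h : Rˣ, g = h ^ 2) ∨ (∃ h : Rˣ, g = -h ^ 2) := by
  classical
  set f : Rˣ →* Rˣ := powMonoidHom 2 with hf
  set Q : Subgroup Rˣ := f.range with hQ
  by_cases hg : g ∈ Q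
  · left; rcases hg with ⟨h, hh⟩; exact ⟨h, hh.symm⟩
  right
  have h1ne : (-1 : Rˣ) ≠ 1 := by
    intro hh
    have : (-1 : R) = 1 := by
      have := congrArg Units.val hh; push_cast at this; simpa using this
    have h20 : (2 : R) = 0 := by linear_combination -this
    rw [isUnit_iff_exists] at h2
    rcases h2 with ⟨c, hc, -⟩
    rw [h20, zero_mul] at hc
    exact zero_ne_one hc
  have hm1Q : (-1 : Rˣ) ∉ Q := by
    rintro ⟨h, hh⟩
    refine hm1 h ?_
    have h3 := congrArg (Units.val) hh
    simp only [hf, powMonoidHom, MonoidHom.coe_mk, OneHom.coe_mk, Units.val_pow_eq_pow_val,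
      Units.val_neg, Units.val_one] at h3
    exact h3.symm
  have hK : Nat.card f.ker = 2 := by
    rw [Nat.card_eq_two_iff' (1 : f.ker)]
    have hmem : (-1 : Rˣ) ∈ f.ker := by
      simp only [MonoidHom.mem_ker, hf, powMonoidHom, MonoidHom.coe_mk, OneHom.coe_mk]
      ext; push_cast; ring
    refine ⟨⟨-1, hmem⟩, ?_, ?_⟩
    · intro hh
      exact h1ne (by simpa using congrArg (fun x : f.ker => (x : Rˣ)) hh)
    · rintro ⟨y, hy⟩ hne
      have hy2 : (y : Rˣ) ^ 2 = 1 := hy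
      have := aux_sqrt_one h2 (y : R) y.isUnit (by
        have := congrArg Units.val hy2; push_cast at this; simpa using this)
      rcases this with h | h
      · exfalso; apply hne; ext; simpa using h
      · ext; simpa using h
  have hcard1 : Nat.card Rˣ = Nat.card (Rˣ ⧸ Q) * Nat.card Q :=
    Subgroup.card_eq_card_quotient_mul_card_subgroup Q
  have hcard2 : Nat.card Rˣ = 2 * Nat.card Q := by
    have e := (QuotientGroup.quotientKerEquivRange f).toEquiv
    have : Nat.card (Rˣ ⧸ f.ker) = Nat.card Q := Nat.card_congr e
    rw [Subgroup.card_eq_card_quotient_mul_card_subgroup f.ker, this, hK, mul_comm]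
  have hQpos : 0 < Nat.card Q := Nat.card_pos
  have hquot : Nat.card (Rˣ ⧸ Q) = 2 := by
    have := hcard1.symm.trans hcard2
    exact Nat.eq_of_mul_eq_mul_right hQpos this
  have key : (QuotientGroup.mk g : Rˣ ⧸ Q) = QuotientGroup.mk (-1 : Rˣ) := by
    rw [Nat.card_eq_two_iff' (1 : Rˣ ⧸ Q)] at hquot
    rcases hquot with ⟨b, hb, huniq⟩
    have hg' : (QuotientGroup.mk g : Rˣ ⧸ Q) ≠ 1 := by
      rw [Ne, QuotientGroup.eq_one_iff]; exact hg
    have hm' : (QuotientGroup.mk (-1:Rˣ) : Rˣ ⧸ Q) ≠ 1 := by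
      rw [Ne, QuotientGroup.eq_one_iff]; exact hm1Q
    rw [huniq _ hg', huniq _ hm']
  rw [QuotientGroup.eq] at key
  rcases key with ⟨h, hh⟩
  refine ⟨h⁻¹, ?_⟩
  have hthis : g⁻¹ * -1 = h ^ 2 := hh.symm
  have h5 : g * h ^ 2 = -1 := by
    calc g * h ^ 2 = g * (g⁻¹ * -1) := by rw [hthis]
    _ = g * g⁻¹ * -1 := by rw [mul_assoc]
    _ = -1 := by rw [mul_inv_cancel, one_mul]
  have hfin : g = -1 * (h ^ 2)⁻¹ := by
    have h6 := congrArg (fun t => t * (h ^ 2)⁻¹) h5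
    simpa [mul_assoc] using h6
  rw [hfin, neg_one_mul, inv_pow]

lemma aux_nonunit_nilpotent [Fintype R] (x : R) (hx : ¬ IsUnit x) :
    ∃ n : ℕ, 0 < n ∧ x ^ n = 0 := by
  classical
  obtain ⟨i, j, hij, hpow⟩ := Finite.exists_ne_map_eq_of_infinite (fun n : ℕ => x ^ n)
  wlog hlt : i < j generalizing i j
  · exact this j i hij.symm hpow.symm (by omega)
  have hxk : ¬ IsUnit (x ^ (j - i)) := by
    intro h
    refine hx (isUnit_of_mul_isUnit_left (y := x ^ (j - i - 1)) ?_)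
    rw [← pow_succ']
    have he : j - i - 1 + 1 = j - i := by omega
    rw [he]; exact h
  have hu : IsUnit (1 - x ^ (j - i)) := by
    rcases IsLocalRing.isUnit_or_isUnit_of_isUnit_add
      (a := 1 - x ^ (j-i)) (b := x ^ (j-i)) (by simp) with h | h
    · exact h
    · exact absurd h hxk
  have hz : x ^ i * (1 - x ^ (j - i)) = 0 := by
    have he : x ^ i * x ^ (j - i) = x ^ j := by
      rw [← pow_add]; congr 1; omega
    rw [mul_sub, mul_one, he, hpow, sub_self]
  have hxi : x ^ i = 0 := by
    rcases hu with ⟨u, hu⟩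
    have h7 := congrArg (fun t => t * (↑u⁻¹ : R)) hz
    simp only [zero_mul] at h7
    calc x ^ i = x ^ i * ((1 - x^(j-i)) * ↑u⁻¹) := by
          rw [← hu, Units.mul_inv, mul_one]
    _ = 0 := by rw [← mul_assoc]; exact h7
  have hipos : 0 < i := by
    rcases Nat.eq_zero_or_pos i with h | h
    · exfalso; rw [h, pow_zero] at hxi; exact one_ne_zero hxi
    · exact h
  exact ⟨i, hipos, hxi⟩

/-- 1 + nilpotent is a square of a unit (2 invertible) -/
lemma aux_one_add_nilpotent_sq (h2 : IsUnit (2 : R)) :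
    ∀ n : ℕ, ∀ x : R, x ^ n = 0 → ∃ v : R, IsUnit v ∧ v ^ 2 = 1 + x := by
  intro n
  induction n using Nat.strong_induction_on with
  | _ n ih =>
    intro x hx
    match n, hx with
    | 0, hx => exact absurd (by rw [pow_zero] at hx; exact hx) one_ne_zero
    | 1, hx => exact ⟨1, isUnit_one, by rw [pow_one] at hx; rw [hx]; ring⟩
    | (m+2), hx =>
      set N := m + 2 with hN
      have hxnu : ¬ IsUnit x := by
        intro h
        have h8 : IsUnit (x ^ N) := h.pow N
        rw [hx] at h8
        simp at h8
      have h1x : IsUnit (1 + x) := by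
        rcases IsLocalRing.isUnit_or_isUnit_of_isUnit_add (a := (1:R) + x) (b := -x)
          (by simp) with h | h
        · exact h
        · exact absurd (by simpa using h) hxnu
      rcases h2 with ⟨u2, hu2⟩
      set c : R := ↑u2⁻¹ with hc
      have hc2 : 2 * c = 1 := by rw [hc, ← hu2, Units.mul_inv]
      set t : R := ↑h1x.unit⁻¹ with ht
      have hti : (1 + x) * t = 1 := by
        rw [ht]
        calc (1+x) * ↑h1x.unit⁻¹ = ↑h1x.unit * ↑h1x.unit⁻¹ := by rw [IsUnit.unit_spec]
        _ = 1 := Units.mul_inv _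
      set y : R := c^2 * x^2 * t with hy
      have hv0 : (1 + c * x) ^ 2 = (1 + x) * (1 + y) := by
        rw [hy]
        have expand : (1 + x) * (1 + c^2*x^2*t) = 1 + x + c^2*x^2*((1+x)*t) := by ring
        rw [expand, hti]
        linear_combination x * hc2
      have hym : y ^ (m + 1) = 0 := by
        have hxx : (x ^ 2) ^ (m+1) = 0 := by
          rw [← pow_mul]
          have h2m : 2 * (m + 1) = N + m := by omega
          rw [h2m, pow_add, hx, zero_mul]
        rw [hy, mul_pow, mul_pow, hxx]
        ring
      obtain ⟨w, hwu, hw⟩ := ih (m+1) (by omega) y hym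
      have h1y : IsUnit (1 + y) := by rw [← hw]; exact hwu.pow 2
      rcases hwu with ⟨wu, hwu'⟩
      refine ⟨(1 + c * x) * ↑wu⁻¹, ?_, ?_⟩
      · have hv0u : IsUnit ((1 + c*x) * (1+c*x)) := by
          rw [← sq, hv0]; exact h1x.mul h1y
        exact (isUnit_of_mul_isUnit_left hv0u).mul (Units.isUnit _)
      · rw [mul_pow, hv0]
        have hwinv : (↑wu⁻¹ : R)^2 * (1 + y) = 1 := by
          rw [← hw, ← hwu', ← mul_pow, Units.inv_mul, one_pow]
        calc (1+x) * (1+y) * (↑wu⁻¹:R)^2 = (1+x) * ((↑wu⁻¹:R)^2 * (1+y)) := by ring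
        _ = 1 + x := by rw [hwinv, mul_one]

lemma aux_exists_sum_sq [Fintype R] (hchar : Odd (ringChar R))
    (hm1 : ∀ a : Rˣ, (-1 : R) ≠ (a : R) ^ 2) :
    ∃ a b : R, a ^ 2 + b ^ 2 = -1 := by
  have h2 : IsUnit (2 : R) := aux_two_isUnit hchar
  by_contra hcon
  push_neg at hcon
  have claim : ∀ n : ℕ, IsUnit ((n : R)) → ∃ s : Rˣ, ((n : R)) = (s : R) ^ 2 := by
    intro n
    induction n with
    | zero => intro h; simp at h
    | succ n ihn =>
      intro hn1
      by_cases hn : IsUnit ((n : R))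
      · obtain ⟨s, hs⟩ := ihn hn
        have hval : ((n+1 : ℕ) : R) = (s:R)^2 + 1 := by push_cast [hs]; ring
        rcases aux_sq_or_neg_sq h2 hm1 hn1.unit with ⟨h, hh⟩ | ⟨h, hh⟩
        · refine ⟨h, ?_⟩
          have := congrArg Units.val hh
          rw [IsUnit.unit_spec] at this
          rw [this]; push_cast; ring
        · exfalso
          have hval2 : (s:R)^2 + 1 = -((h:R))^2 := by
            have := congrArg Units.val hh
            rw [IsUnit.unit_spec] at this
            rw [← hval, this]; push_cast; ring
          apply hcon ((s:R) * ↑h⁻¹) (↑h⁻¹ : R)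
          have hinv : (↑h⁻¹ : R) * (h : R) = 1 := Units.inv_mul _
          calc ((s:R) * ↑h⁻¹)^2 + (↑h⁻¹:R)^2 = ((s:R)^2 + 1) * (↑h⁻¹:R)^2 := by ring
          _ = -((h:R))^2 * (↑h⁻¹:R)^2 := by rw [hval2]
          _ = -(((↑h⁻¹:R) * (h:R)) * ((↑h⁻¹:R) * (h:R))) := by ring
          _ = -1 := by rw [hinv]; ring
      · obtain ⟨k, hk, hnk⟩ := aux_nonunit_nilpotent ((n:R)) hn
        obtain ⟨v, hv, hv2⟩ := aux_one_add_nilpotent_sq h2 k ((n:R)) hnk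
        refine ⟨hv.unit, ?_⟩
        rw [IsUnit.unit_spec]
        rw [hv2]; push_cast; ring
  have hcpos : 1 ≤ ringChar R := by
    rcases hchar with ⟨t, ht⟩; omega
  have hneg1 : ((ringChar R - 1 : ℕ) : R) = -1 := by
    have h0 : ((ringChar R : ℕ) : R) = 0 := ringChar.Nat.cast_ringChar
    have : ((ringChar R - 1 : ℕ) : R) + 1 = ((ringChar R : ℕ) : R) := by
      rw_mod_cast [Nat.sub_add_cancel hcpos]
    rw [h0] at this
    linear_combination this
  obtain ⟨s, hs⟩ := claim (ringChar R - 1) (by rw [hneg1]; exact IsUnit.neg isUnit_one)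
  rw [hneg1] at hs
  exact hm1 s hs

end RingLemmas

/-! ### General cogredience lemmas -/

section CogLemmas
variable {R : Type*} [CommRing R] {n : Type*} [Fintype n] [DecidableEq n]

lemma cog_refl (S : Matrix n n R) : Cogredient S S :=
  ⟨1, by simp, by simp⟩

lemma cog_trans {S1 S2 S3 : Matrix n n R} (h12 : Cogredient S1 S2) (h23 : Cogredient S2 S3) :
    Cogredient S1 S3 := by
  obtain ⟨P, hP, hPe⟩ := h12
  obtain ⟨Q, hQ, hQe⟩ := h23
  refine ⟨Q * P, by rw [det_mul]; exact hQ.mul hP, ?_⟩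
  rw [transpose_mul, ← hQe, ← hPe]
  noncomm_ring

lemma cog_symm {S1 S2 : Matrix n n R} (h : Cogredient S1 S2) : Cogredient S2 S1 := by
  obtain ⟨P, hP, hPe⟩ := h
  refine ⟨P⁻¹, ?_, ?_⟩
  · rwa [det_nonsing_inv, isUnit_ringInverse]
  · rw [← hPe, transpose_nonsing_inv]
    have h1 : P⁻¹ * P = 1 := nonsing_inv_mul P hP
    have h2 : Pᵀ * (Pᵀ)⁻¹ = 1 := mul_nonsing_inv Pᵀ (by rwa [det_transpose])
    calc P⁻¹ * (P * S1 * Pᵀ) * (Pᵀ)⁻¹ = (P⁻¹ * P) * S1 * (Pᵀ * (Pᵀ)⁻¹) := by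
          noncomm_ring
    _ = S1 := by rw [h1, h2, one_mul, mul_one]

lemma cog_of_eq {S1 S2 : Matrix n n R} (P : Matrix n n R)
    (he : P * S1 * Pᵀ = S2) (hd : IsUnit S2.det) : Cogredient S1 S2 := by
  refine ⟨P, ?_, he⟩
  have : S2.det = P.det * S1.det * P.det := by
    rw [← he, det_mul, det_mul, det_transpose]
  rw [this] at hd
  exact isUnit_of_mul_isUnit_left (isUnit_of_mul_isUnit_left (by rwa [mul_comm] at hd))

end CogLemmas

section MatrixLemmas
variable {R : Type*} [CommRing R]

lemma cog_oplus {a b : ℕ} {A A' : Matrix (Fin a) (Fin a) R} {B B' : Matrix (Fin b) (Fin b) R}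
    (hA : Cogredient A A') (hB : Cogredient B B') :
    Cogredient (matOplus A B) (matOplus A' B') := by
  obtain ⟨P, hP, hPe⟩ := hA
  obtain ⟨Q, hQ, hQe⟩ := hB
  refine ⟨(reindex finSumFinEquiv finSumFinEquiv) (fromBlocks P 0 0 Q), ?_, ?_⟩
  · rw [det_reindex_self, det_fromBlocks_zero₂₁]
    exact hP.mul hQ
  · unfold matOplus
    rw [reindex_apply, reindex_apply, reindex_apply]
    rw [transpose_submatrix]
    rw [submatrix_mul_equiv, submatrix_mul_equiv]
    congr 1
    rw [fromBlocks_transpose, fromBlocks_multiply, fromBlocks_multiply]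
    simp only [Matrix.mul_zero, Matrix.zero_mul, add_zero, zero_add, transpose_zero]
    rw [hPe, hQe]

lemma elim_symm_apply {a b : ℕ} {S : Type*} (f : Fin a → S) (g : Fin b → S) (k : Fin (a + b)) :
    Sum.elim f g (finSumFinEquiv.symm k) =
      if h : (k : ℕ) < a then f ⟨k, h⟩ else g ⟨(k : ℕ) - a, by omega⟩ := by
  rcases Nat.lt_or_ge (k : ℕ) a with hk | hk
  · have hkeq : k = Fin.castAdd b ⟨(k:ℕ), hk⟩ := by ext; simp
    rw [hkeq, finSumFinEquiv_symm_apply_castAdd]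
    simp [hk]
  · have hkeq : k = Fin.natAdd a ⟨(k:ℕ) - a, by omega⟩ := by ext; simp; omega
    rw [hkeq, finSumFinEquiv_symm_apply_natAdd]
    have : ¬ ((Fin.natAdd a ⟨(k:ℕ) - a, by omega⟩ : Fin (a+b)) : ℕ) < a := by simp
    rw [dif_neg this]
    simp

lemma oplus_diag {a b : ℕ} (f : Fin a → R) (g : Fin b → R) :
    (Matrix.reindex finSumFinEquiv finSumFinEquiv)
      (Matrix.fromBlocks (diagonal f) 0 0 (diagonal g)) =
    diagonal (fun k : Fin (a+b) =>
      if h : (k : ℕ) < a then f ⟨k, h⟩ else g ⟨(k : ℕ) - a, by omega⟩) := by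
  rw [fromBlocks_diagonal, reindex_apply, submatrix_diagonal_equiv]
  exact congrArg diagonal (funext fun k => elim_symm_apply f g k)

lemma hyp_cog {ν : ℕ} (c : R) (hc : 2 * c = 1) :
    Cogredient (hypMat R ν) (matOplus (1 : Matrix (Fin ν) (Fin ν) R) (-1)) := by
  classical
  refine cog_of_eq ((Matrix.reindex finSumFinEquiv finSumFinEquiv)
    (Matrix.fromBlocks (1 : Matrix (Fin ν) (Fin ν) R) (c • 1) 1 (-(c • 1)))) ?_ ?_
  · unfold hypMat matOplus
    rw [reindex_apply, reindex_apply, reindex_apply, transpose_submatrix,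
      submatrix_mul_equiv, submatrix_mul_equiv]
    congr 1
    rw [fromBlocks_transpose, fromBlocks_multiply, fromBlocks_multiply]
    simp only [Matrix.mul_one, Matrix.one_mul, Matrix.mul_zero, Matrix.zero_mul,
      Matrix.neg_mul, Matrix.mul_neg, transpose_one, transpose_smul, transpose_neg,
      add_zero, zero_add]
    have e1 : c • (1 : Matrix (Fin ν) (Fin ν) R) + c • 1 = 1 := by
      rw [← add_smul, ← two_mul, hc, one_smul]
    have e2 : c • (1 : Matrix (Fin ν) (Fin ν) R) + -(c • 1) = 0 := by abel
    have e3 : -(c • (1 : Matrix (Fin ν) (Fin ν) R)) + c • 1 = 0 := by abel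
    have e4 : -(c • (1 : Matrix (Fin ν) (Fin ν) R)) + -(c • 1) = -1 := by
      rw [← neg_add, e1]
    rw [e1, e2, e3, e4]
  · rw [matOplus, det_reindex_self, det_fromBlocks_zero₂₁, det_one, one_mul]
    have : (-1 : Matrix (Fin ν) (Fin ν) R) = (-1 : R) • (1 : Matrix (Fin ν) (Fin ν) R) := by
      simp
    rw [this, det_smul, det_one, mul_one]
    exact (IsUnit.neg isUnit_one).pow _

end MatrixLemmas

/-! ### Row-sparse matrices and conjugation of diagonal matrices -/

section RowMat
variable {R : Type*} [CommRing R] {n : Type*} [Fintype n] [DecidableEq n]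

def rowMat (α β : n → R) (p q : n → n) : Matrix n n R :=
  fun i k => (if k = p i then α i else 0) + (if k = q i then β i else 0)

lemma sum_if2 (x y : n) (c e : R) (d : n → R) :
    (∑ k : n, (if k = x then c else 0) * d k * (if k = y then e else 0))
      = c * d x * (if x = y then e else 0) := by
  have h : ∀ k : n, (if k = x then c else 0) * d k * (if k = y then e else 0)
      = if k = x then (fun t => c * d t * (if t = y then e else 0)) k else 0 := by
    intro k; by_cases h : k = x <;> simp [h]
  rw [Finset.sum_congr rfl (fun k _ => h k), Finset.sum_ite_eq' Finset.univ x
    (fun t => c * d t * (if t = y then e else 0))]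
  simp

lemma rowMat_conj_diag (α β : n → R) (p q : n → n) (d : n → R) (i j : n) :
    (rowMat α β p q * Matrix.diagonal d * (rowMat α β p q)ᵀ) i j =
      α i * d (p i) * ((if p i = p j then α j else 0) + (if p i = q j then β j else 0))
    + β i * d (q i) * ((if q i = p j then α j else 0) + (if q i = q j then β j else 0)) := by
  rw [Matrix.mul_apply]
  have h1 : ∀ k, (rowMat α β p q * Matrix.diagonal d) i k * (rowMat α β p q)ᵀ k j
      = ((if k = p i then α i else 0) * d k * (if k = p j then α j else 0))
      + ((if k = p i then α i else 0) * d k * (if k = q j then β j else 0))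
      + ((if k = q i then β i else 0) * d k * (if k = p j then α j else 0))
      + ((if k = q i then β i else 0) * d k * (if k = q j then β j else 0)) := by
    intro k
    rw [Matrix.mul_diagonal, transpose_apply]
    unfold rowMat
    ring
  rw [Finset.sum_congr rfl (fun k _ => h1 k)]
  rw [Finset.sum_add_distrib, Finset.sum_add_distrib, Finset.sum_add_distrib]
  rw [sum_if2, sum_if2, sum_if2, sum_if2]
  ring

end RowMat

/-! ### The diagonal patterns on `Fin (ν+ν+1)` and the links between them -/

def gOne (R : Type*) [CommRing R] (ν : ℕ) (z : R) (k : Fin (ν+ν+1)) : R :=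
  if (k:ℕ) < ν+ν then 1 else z

def gTwo (R : Type*) [CommRing R] (ν : ℕ) (k : Fin (ν+ν+1)) : R :=
  if (k:ℕ) < ν+ν then 1 else -1

def gThree (R : Type*) [CommRing R] (ν : ℕ) (k : Fin (ν+ν+1)) : R :=
  if ((k:ℕ) < ν ∨ (k:ℕ) = ν+ν-1) then 1 else -1

def dTwo (R : Type*) [CommRing R] (ν : ℕ) (k : Fin (ν+ν+1)) : R :=
  if ((k:ℕ) < ν ∨ (k:ℕ) = ν+ν) then 1 else -1

def rotP (ν : ℕ) (i : Fin (ν+ν+1)) : Fin (ν+ν+1) :=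
  if ν ≤ (i:ℕ) ∧ (i:ℕ) < ν+ν-1 ∧ ((i:ℕ)-ν) % 2 = 1
  then ⟨(i:ℕ)-1, lt_of_le_of_lt (Nat.sub_le _ _) i.isLt⟩ else i

def rotQ (ν : ℕ) (i : Fin (ν+ν+1)) : Fin (ν+ν+1) :=
  if h : ν ≤ (i:ℕ) ∧ (i:ℕ) < ν+ν-1 ∧ ((i:ℕ)-ν) % 2 = 0
  then ⟨(i:ℕ)+1, by omega⟩ else i

def rotA {R : Type*} [CommRing R] (ν : ℕ) (a b : R) (i : Fin (ν+ν+1)) : R :=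
  if ν ≤ (i:ℕ) ∧ (i:ℕ) < ν+ν-1 then (if ((i:ℕ)-ν) % 2 = 0 then a else -b) else 1

def rotB {R : Type*} [CommRing R] (ν : ℕ) (a b : R) (i : Fin (ν+ν+1)) : R :=
  if ν ≤ (i:ℕ) ∧ (i:ℕ) < ν+ν-1 then (if ((i:ℕ)-ν) % 2 = 0 then b else a) else 0

def swapP (ν : ℕ) (i : Fin (ν+ν+1)) : Fin (ν+ν+1) :=
  if (i:ℕ) = ν+ν-1 then ⟨ν+ν, by omega⟩
  else if (i:ℕ) = ν+ν then ⟨ν+ν-1, by omega⟩ else i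

section unfoldlemmas
variable {R : Type*} [CommRing R] {ν : ℕ} {a b : R}

lemma rotP_out (i : Fin (ν+ν+1)) (h : ¬(ν ≤ (i:ℕ) ∧ (i:ℕ) < ν+ν-1)) : rotP ν i = i := by
  unfold rotP; rw [if_neg]; rintro ⟨h1, h2, -⟩; exact h ⟨h1, h2⟩

lemma rotP_even (i : Fin (ν+ν+1)) (h : ν ≤ (i:ℕ) ∧ (i:ℕ) < ν+ν-1) (hp : ((i:ℕ)-ν) % 2 = 0) :
    rotP ν i = i := by
  unfold rotP; rw [if_neg]; rintro ⟨-, -, h3⟩; omega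

lemma rotP_odd (i : Fin (ν+ν+1)) (h : ν ≤ (i:ℕ) ∧ (i:ℕ) < ν+ν-1) (hp : ((i:ℕ)-ν) % 2 = 1) :
    rotP ν i = ⟨(i:ℕ)-1, lt_of_le_of_lt (Nat.sub_le _ _) i.isLt⟩ := by
  unfold rotP; rw [if_pos ⟨h.1, h.2, hp⟩]

lemma rotQ_out (i : Fin (ν+ν+1)) (h : ¬(ν ≤ (i:ℕ) ∧ (i:ℕ) < ν+ν-1)) : rotQ ν i = i := by
  unfold rotQ; rw [dif_neg]; rintro ⟨h1, h2, -⟩; exact h ⟨h1, h2⟩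

lemma rotQ_even (i : Fin (ν+ν+1)) (h : ν ≤ (i:ℕ) ∧ (i:ℕ) < ν+ν-1) (hp : ((i:ℕ)-ν) % 2 = 0) :
    rotQ ν i = ⟨(i:ℕ)+1, by omega⟩ := by
  unfold rotQ; rw [dif_pos ⟨h.1, h.2, hp⟩]

lemma rotQ_odd (i : Fin (ν+ν+1)) (h : ν ≤ (i:ℕ) ∧ (i:ℕ) < ν+ν-1) (hp : ((i:ℕ)-ν) % 2 = 1) :
    rotQ ν i = i := by
  unfold rotQ; rw [dif_neg]; rintro ⟨-, -, h3⟩; omega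

lemma rotA_out (i : Fin (ν+ν+1)) (h : ¬(ν ≤ (i:ℕ) ∧ (i:ℕ) < ν+ν-1)) : rotA ν a b i = 1 := by
  unfold rotA; rw [if_neg h]

lemma rotA_even (i : Fin (ν+ν+1)) (h : ν ≤ (i:ℕ) ∧ (i:ℕ) < ν+ν-1) (hp : ((i:ℕ)-ν) % 2 = 0) :
    rotA ν a b i = a := by
  unfold rotA; rw [if_pos h, if_pos hp]

lemma rotA_odd (i : Fin (ν+ν+1)) (h : ν ≤ (i:ℕ) ∧ (i:ℕ) < ν+ν-1) (hp : ((i:ℕ)-ν) % 2 = 1) :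
    rotA ν a b i = -b := by
  unfold rotA; rw [if_pos h, if_neg (by omega)]

lemma rotB_out (i : Fin (ν+ν+1)) (h : ¬(ν ≤ (i:ℕ) ∧ (i:ℕ) < ν+ν-1)) : rotB ν a b i = 0 := by
  unfold rotB; rw [if_neg h]

lemma rotB_even (i : Fin (ν+ν+1)) (h : ν ≤ (i:ℕ) ∧ (i:ℕ) < ν+ν-1) (hp : ((i:ℕ)-ν) % 2 = 0) :
    rotB ν a b i = b := by
  unfold rotB; rw [if_pos h, if_pos hp]

lemma rotB_odd (i : Fin (ν+ν+1)) (h : ν ≤ (i:ℕ) ∧ (i:ℕ) < ν+ν-1) (hp : ((i:ℕ)-ν) % 2 = 1) :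
    rotB ν a b i = a := by
  unfold rotB; rw [if_pos h, if_neg (by omega)]
end unfoldlemmas

section Links
variable {R : Type*} [CommRing R]

lemma isUnit_det_pm (N : ℕ) (d : Fin N → R) (h : ∀ k, d k = 1 ∨ d k = -1) :
    IsUnit (Matrix.diagonal d).det := by
  rw [Matrix.det_diagonal]
  refine IsUnit.of_mul_eq_one (∏ k, d k) ?_
  rw [← Finset.prod_mul_distrib]
  rw [Finset.prod_congr rfl
    (fun k _ => show d k * d k = 1 by rcases h k with h | h <;> rw [h] <;> ring)]
  exact Finset.prod_const_one

lemma linkA (ν : ℕ) (z w : R) (hw : w * z * w = -1) :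
    Matrix.diagonal (fun k : Fin (ν+ν+1) => if (k:ℕ) < ν+ν then (1:R) else w) *
      Matrix.diagonal (gOne R ν z) *
      (Matrix.diagonal (fun k : Fin (ν+ν+1) => if (k:ℕ) < ν+ν then (1:R) else w))ᵀ
      = Matrix.diagonal (gTwo R ν) := by
  rw [Matrix.diagonal_transpose, Matrix.diagonal_mul_diagonal, Matrix.diagonal_mul_diagonal]
  refine congrArg Matrix.diagonal (funext fun k => ?_)
  simp only [gOne, gTwo]
  split_ifs with h
  · ring
  · exact hw

set_option maxHeartbeats 1000000 in
lemma linkB (ν : ℕ) (hν2 : ν % 2 = 1) (a b : R) (hab : a^2 + b^2 = -1) :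
    rowMat (rotA ν a b) (rotB ν a b) (rotP ν) (rotQ ν) * Matrix.diagonal (gTwo R ν) *
      (rowMat (rotA ν a b) (rotB ν a b) (rotP ν) (rotQ ν))ᵀ
      = Matrix.diagonal (gThree R ν) := by
  ext i j
  rw [rowMat_conj_diag, Matrix.diagonal_apply]
  have hi := i.isLt
  have hj := j.isLt
  by_cases hzi : ν ≤ (i:ℕ) ∧ (i:ℕ) < ν+ν-1 <;> by_cases hzj : ν ≤ (j:ℕ) ∧ (j:ℕ) < ν+ν-1
  · by_cases hpi : ((i:ℕ)-ν) % 2 = 0 <;> by_cases hpj : ((j:ℕ)-ν) % 2 = 0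
    · rw [rotP_even i hzi hpi, rotP_even j hzj hpj, rotQ_even i hzi hpi, rotQ_even j hzj hpj,
        rotA_even i hzi hpi, rotA_even j hzj hpj, rotB_even i hzi hpi, rotB_even j hzj hpj]
      simp only [gTwo, gThree, Fin.ext_iff]
      split_ifs <;> first | omega | ring1 | linear_combination hab | linear_combination -hab
    · rw [rotP_even i hzi hpi, rotP_odd j hzj (by omega), rotQ_even i hzi hpi,
        rotQ_odd j hzj (by omega), rotA_even i hzi hpi, rotA_odd j hzj (by omega),
        rotB_even i hzi hpi, rotB_odd j hzj (by omega)]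
      simp only [gTwo, gThree, Fin.ext_iff]
      split_ifs <;> first | omega | ring1 | linear_combination hab | linear_combination -hab
    · rw [rotP_odd i hzi (by omega), rotP_even j hzj hpj, rotQ_odd i hzi (by omega),
        rotQ_even j hzj hpj, rotA_odd i hzi (by omega), rotA_even j hzj hpj,
        rotB_odd i hzi (by omega), rotB_even j hzj hpj]
      simp only [gTwo, gThree, Fin.ext_iff]
      split_ifs <;> first | omega | ring1 | linear_combination hab | linear_combination -hab
    · rw [rotP_odd i hzi (by omega), rotP_odd j hzj (by omega), rotQ_odd i hzi (by omega),
        rotQ_odd j hzj (by omega), rotA_odd i hzi (by omega), rotA_odd j hzj (by omega),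
        rotB_odd i hzi (by omega), rotB_odd j hzj (by omega)]
      simp only [gTwo, gThree, Fin.ext_iff]
      split_ifs <;> first | omega | ring1 | linear_combination hab | linear_combination -hab
  · by_cases hpi : ((i:ℕ)-ν) % 2 = 0
    · rw [rotP_even i hzi hpi, rotP_out j hzj, rotQ_even i hzi hpi, rotQ_out j hzj,
        rotA_even i hzi hpi, rotA_out j hzj, rotB_even i hzi hpi, rotB_out j hzj]
      simp only [gTwo, gThree, Fin.ext_iff]
      split_ifs <;> first | omega | ring1 | linear_combination hab | linear_combination -hab
    · rw [rotP_odd i hzi (by omega), rotP_out j hzj, rotQ_odd i hzi (by omega), rotQ_out j hzj,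
        rotA_odd i hzi (by omega), rotA_out j hzj, rotB_odd i hzi (by omega), rotB_out j hzj]
      simp only [gTwo, gThree, Fin.ext_iff]
      split_ifs <;> first | omega | ring1 | linear_combination hab | linear_combination -hab
  · by_cases hpj : ((j:ℕ)-ν) % 2 = 0
    · rw [rotP_out i hzi, rotP_even j hzj hpj, rotQ_out i hzi, rotQ_even j hzj hpj,
        rotA_out i hzi, rotA_even j hzj hpj, rotB_out i hzi, rotB_even j hzj hpj]
      simp only [gTwo, gThree, Fin.ext_iff]
      split_ifs <;> first | omega | ring1 | linear_combination hab | linear_combination -hab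
    · rw [rotP_out i hzi, rotP_odd j hzj (by omega), rotQ_out i hzi, rotQ_odd j hzj (by omega),
        rotA_out i hzi, rotA_odd j hzj (by omega), rotB_out i hzi, rotB_odd j hzj (by omega)]
      simp only [gTwo, gThree, Fin.ext_iff]
      split_ifs <;> first | omega | ring1 | linear_combination hab | linear_combination -hab
  · rw [rotP_out i hzi, rotP_out j hzj, rotQ_out i hzi, rotQ_out j hzj,
      rotA_out i hzi, rotA_out j hzj, rotB_out i hzi, rotB_out j hzj]
    simp only [gTwo, gThree, Fin.ext_iff]
    split_ifs <;> first | omega | ring1 | linear_combination hab | linear_combination -hab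

set_option maxHeartbeats 1000000 in
lemma linkC (ν : ℕ) (hν1 : 1 ≤ ν) :
    rowMat (fun _ => (1:R)) (fun _ => 0) (swapP ν) (swapP ν) * Matrix.diagonal (gThree R ν) *
      (rowMat (fun _ => (1:R)) (fun _ => 0) (swapP ν) (swapP ν))ᵀ
      = Matrix.diagonal (dTwo R ν) := by
  ext i j
  rw [rowMat_conj_diag, Matrix.diagonal_apply]
  have hi := i.isLt
  have hj := j.isLt
  simp only [gThree, dTwo, swapP, Fin.ext_iff, Fin.val_mk, mul_zero, zero_mul, add_zero,
    mul_one, one_mul, zero_add, mul_ite, ite_mul]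
  split_ifs <;> simp -failIfUnchanged only [Fin.val_mk, eq_self_iff_true, not_true_eq_false, true_or, or_true]
    at * <;> first | rfl | omega | ring1 | exact absurd trivial (by assumption)

lemma lhs_eq (ν : ℕ) (z : R) :
    matOplus (1 : Matrix (Fin (ν + ν)) (Fin (ν + ν)) R)
        (Matrix.diagonal fun _ : Fin 1 => z) = Matrix.diagonal (gOne R ν z) := by
  unfold matOplus
  rw [← Matrix.diagonal_one, oplus_diag]
  refine congrArg Matrix.diagonal (funext fun k => ?_)
  rw [gOne]
  split_ifs <;> rfl

lemma rhs_eq (ν : ℕ) :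
    matOplus (matOplus (1 : Matrix (Fin ν) (Fin ν) R) (-1)) (1 : Matrix (Fin 1) (Fin 1) R)
      = Matrix.diagonal (dTwo R ν) := by
  unfold matOplus
  have hneg : (-1 : Matrix (Fin ν) (Fin ν) R) = Matrix.diagonal (fun _ => (-1 : R)) := by
    rw [← Matrix.diagonal_one, Matrix.diagonal_neg]
  rw [hneg, ← Matrix.diagonal_one (n := Fin ν), oplus_diag,
    ← Matrix.diagonal_one (n := Fin 1), oplus_diag]
  refine congrArg Matrix.diagonal (funext fun k => ?_)
  have hk := k.isLt
  rw [dTwo]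
  simp only [Fin.val_mk]
  split_ifs <;> first | rfl | omega | (exfalso; omega)

end Links

/-- if -1 is not a square of a unit, z is a non-square unit and ν is a
positive odd integer, then `I_{2ν} ⊕ (z)` is cogredient to `H_{2ν} ⊕ (1)`. -/
theorem stmt_17 (R : Type*) [CommRing R] [IsLocalRing R] [Fintype R]
    (hchar : Odd (ringChar R)) (hm1 : ∀ a : Rˣ, (-1 : R) ≠ (a : R) ^ 2)
    (z : Rˣ) (hz : ∀ a : Rˣ, z ≠ a ^ 2) (ν : ℕ) (hν : 0 < ν) (hνodd : Odd ν) :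
    Cogredient (matOplus (1 : Matrix (Fin (ν + ν)) (Fin (ν + ν)) R)
        (Matrix.diagonal fun _ : Fin 1 => (z : R)))
      (matOplus (hypMat R ν) (1 : Matrix (Fin 1) (Fin 1) R)) := by
  classical
  have h2 : IsUnit (2 : R) := aux_two_isUnit hchar
  have hν2 : ν % 2 = 1 := by rcases hνodd with ⟨t, ht⟩; omega
  -- a² + b² = -1
  obtain ⟨a, b, hab⟩ := aux_exists_sum_sq hchar hm1
  -- z = -h², so w z w = -1 with w = h⁻¹
  obtain ⟨h, hh⟩ : ∃ h : Rˣ, z = -h ^ 2 := by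
    rcases aux_sq_or_neg_sq h2 hm1 z with ⟨h, hh⟩ | hgood
    · exact absurd hh (hz h)
    · exact hgood
  have hzc : (z : R) = -((h : R))^2 := by
    have := congrArg Units.val hh; push_cast at this; simpa using this
  set w : R := (↑h⁻¹ : R) with hwdef
  have hinv : w * (h : R) = 1 := Units.inv_mul _
  have hinv2 : (h : R) * w = 1 := Units.mul_inv _
  have hw : w * (z : R) * w = -1 := by
    calc w * (z : R) * w = -((w * (h:R)) * ((h:R) * w)) := by rw [hzc]; ring
    _ = -1 := by rw [hinv, hinv2]; ring
  -- 2c = 1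
  obtain ⟨u2, hu2⟩ := h2
  have hc : 2 * (↑u2⁻¹ : R) = 1 := by rw [← hu2, Units.mul_inv]
  -- determinant facts
  have hdet2 : IsUnit (Matrix.diagonal (gTwo R ν)).det := by
    refine isUnit_det_pm _ _ fun k => ?_
    rw [gTwo]; split_ifs; exacts [Or.inl rfl, Or.inr rfl]
  have hdet3 : IsUnit (Matrix.diagonal (gThree R ν)).det := by
    refine isUnit_det_pm _ _ fun k => ?_
    rw [gThree]; split_ifs; exacts [Or.inl rfl, Or.inr rfl]
  have hdetD : IsUnit (Matrix.diagonal (dTwo R ν)).det := by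
    refine isUnit_det_pm _ _ fun k => ?_
    rw [dTwo]; split_ifs; exacts [Or.inl rfl, Or.inr rfl]
  -- the chain
  have cogA : Cogredient (Matrix.diagonal (gOne R ν (z : R))) (Matrix.diagonal (gTwo R ν)) :=
    cog_of_eq _ (linkA ν (z : R) w hw) hdet2
  have cogB : Cogredient (Matrix.diagonal (gTwo R ν)) (Matrix.diagonal (gThree R ν)) :=
    cog_of_eq _ (linkB ν hν2 a b hab) hdet3
  have cogC : Cogredient (Matrix.diagonal (gThree R ν)) (Matrix.diagonal (dTwo R ν)) :=
    cog_of_eq _ (linkC ν hν) hdetD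
  have cogHyp : Cogredient (hypMat R ν) (matOplus (1 : Matrix (Fin ν) (Fin ν) R) (-1)) :=
    hyp_cog _ hc
  have cogLast : Cogredient
      (matOplus (matOplus (1 : Matrix (Fin ν) (Fin ν) R) (-1)) (1 : Matrix (Fin 1) (Fin 1) R))
      (matOplus (hypMat R ν) (1 : Matrix (Fin 1) (Fin 1) R)) :=
    cog_oplus (cog_symm cogHyp) (cog_refl 1)
  have cogLast' : Cogredient (Matrix.diagonal (dTwo R ν))
      (matOplus (hypMat R ν) (1 : Matrix (Fin 1) (Fin 1) R)) := by
    rw [← rhs_eq]; exact cogLast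
  rw [lhs_eq]
  exact cog_trans (cog_trans (cog_trans cogA cogB) cogC) cogLast'
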